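/- (Truth Lemma.) Let Γ₀ be a maximally Log-consistent set and M^c the canonical model for Γ₀. Then for every formula φ ∈ L_Int and every Δ ∈ [Γ₀]_⊞: M^c, Δ ⊨ φ if and only if φ ∈ Δ. -/

import Mathlib

/-- Formulas of classical propositional logic `L_CPL` over a countable set
of atomic propositions (represented by natural numbers). -/
inductive CPL : Type
  | top : CPL
  | atom : ℕ → CPL
  | neg : CPL → CPL
  | or : CPL → CPL → CPL
  | and : CPL → CPL → CPL
  deriving DecidableEq
/-- `Var(φ)`: the (finite) set of atomic propositions occurring in `φ`. -/
def CPL.var : CPL → Finset ℕ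
  | .top => ∅
  | .atom p => {p}
  | .neg φ => φ.var
  | .or φ ψ => φ.var ∪ ψ.var
  | .and φ ψ => φ.var ∪ ψ.var

/-- `p̄ := p ∨ ¬p`. -/
def pbar (p : ℕ) : CPL := .or (.atom p) (.neg (.atom p))

/-- Conjunction of a list of `L_CPL` formulas (empty conjunction is `⊤`). -/
def conjList : List CPL → CPL
  | [] => .top
  | [α] => α
  | α :: β :: rest => .and α (conjList (β :: rest))

/-- `φ̄ := ⋀_{p ∈ Var(φ)} (p ∨ ¬p)`, with the conjuncts taken in the fixed
(increasing) enumeration order of the atomic propositions. -/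
def CPL.bar (φ : CPL) : CPL := conjList ((φ.var.sort (· ≤ ·)).map pbar)
/-- Formulas of the language `L_Int`, extending `L_CPL` (embedded via `of`) by
negation, disjunction, conjunction, the global modality `⊞` (`box`) and the
intention modality `I` (`int`), which applies only to `L_CPL` formulas. -/
inductive Form : Type
  | of : CPL → Form
  | neg : Form → Form
  | or : Form → Form → Form
  | and : Form → Form → Form
  | box : Form → Form
  | int : CPL → Form
  deriving DecidableEq
/-- Material implication in `L_Int`: `φ → ψ := ¬φ ∨ ψ`. -/
def Form.imp (φ ψ : Form) : Form := .or (.neg φ) ψ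

/-- Material biconditional in `L_Int`: `φ ↔ ψ := (φ → ψ) ∧ (ψ → φ)`. -/
def Form.iff (φ ψ : Form) : Form := .and (φ.imp ψ) (ψ.imp φ)

/-- `⊥ := ¬⊤`. -/
def Form.bot : Form := .neg (.of .top)

/-- Boolean evaluation of `L_CPL` formulas under a valuation of the atoms. -/
def CPL.eval (v : ℕ → Bool) : CPL → Bool
  | .top => true
  | .atom p => v p
  | .neg φ => !φ.eval v
  | .or φ ψ => φ.eval v || ψ.eval v
  | .and φ ψ => φ.eval v && ψ.eval v

/-- Boolean evaluation of `L_Int` formulas, treating `⊞`- and `I`-formulas as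
atoms (evaluated by `u`). -/
def Form.eval (v : ℕ → Bool) (u : Form → Bool) : Form → Bool
  | .of α => α.eval v
  | .neg φ => !φ.eval v u
  | .or φ ψ => φ.eval v u || ψ.eval v u
  | .and φ ψ => φ.eval v u && ψ.eval v u
  | .box φ => u (.box φ)
  | .int α => u (.int α)

/-- Classical propositional tautologies of `L_Int` (with modal formulas
treated as atoms). -/
def Taut (φ : Form) : Prop := ∀ v u, φ.eval v u = true

/-- Derivability in the proof system `Log`: classical tautologies and Modus
Ponens; `S5` axioms and necessitation for `⊞`; and the intention axioms
Ax1: `I⊤`; Ax2: `Iφ → Iφ̄`; Ax3: `Iφ → ¬I¬φ`; Ax4: `(Iφ ∧ Iψ) ↔ I(φ ∧ ψ)`;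
Ax5: `⊞(ψ → φ) → ((Iψ ∧ Iφ̄) → Iφ)`. -/
inductive Deriv : Set Form → Form → Prop
  | prem {Γ : Set Form} {φ : Form} : φ ∈ Γ → Deriv Γ φ
  | taut {Γ : Set Form} {φ : Form} : Taut φ → Deriv Γ φ
  | mp {Γ : Set Form} {φ ψ : Form} :
      Deriv Γ (φ.imp ψ) → Deriv Γ φ → Deriv Γ ψ
  | boxK {Γ : Set Form} (φ ψ : Form) :
      Deriv Γ ((Form.box (φ.imp ψ)).imp ((Form.box φ).imp (Form.box ψ)))
  | boxT {Γ : Set Form} (φ : Form) : Deriv Γ ((Form.box φ).imp φ)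
  | box5 {Γ : Set Form} (φ : Form) :
      Deriv Γ ((Form.neg (Form.box φ)).imp (Form.box (Form.neg (Form.box φ))))
  | nec {Γ : Set Form} {φ : Form} : Deriv ∅ φ → Deriv Γ (Form.box φ)
  | ax1 {Γ : Set Form} : Deriv Γ (Form.int .top)
  | ax2 {Γ : Set Form} (α : CPL) :
      Deriv Γ ((Form.int α).imp (Form.int α.bar))
  | ax3 {Γ : Set Form} (α : CPL) :
      Deriv Γ ((Form.int α).imp (Form.neg (Form.int (CPL.neg α))))
  | ax4 {Γ : Set Form} (α β : CPL) :
      Deriv Γ ((Form.and (.int α) (.int β)).iff (Form.int (.and α β)))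
  | ax5 {Γ : Set Form} (α β : CPL) :
      Deriv Γ ((Form.box ((Form.of β).imp (Form.of α))).imp
        ((Form.and (.int β) (.int α.bar)).imp (Form.int α)))

/-- A set of formulas is `Log`-consistent if `⊥` is not derivable from it. -/
def LogConsistent (Γ : Set Form) : Prop := ¬ Deriv Γ Form.bot

/-- A maximally `Log`-consistent set: consistent with no proper consistent
extension. -/
def MCS (Γ : Set Form) : Prop :=
  LogConsistent Γ ∧ ∀ Δ, LogConsistent Δ → Γ ⊆ Δ → Δ = Γ
/-- `Γ[⊞] = {φ : ⊞φ ∈ Γ}`. -/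
def boxSet (Γ : Set Form) : Set Form := {φ | Form.box φ ∈ Γ}

/-- `Γ[I] = {φ ∈ L_Int : Iψ ∧ ⊞(ψ → φ) ∈ Γ for some ψ ∈ L_CPL}`. -/
def intSet (Γ : Set Form) : Set Form :=
  {φ | ∃ ψ : CPL, Form.and (Form.int ψ) (Form.box ((Form.of ψ).imp φ)) ∈ Γ}
/-- `[Γ₀]_⊞`: the `∼⊞`-equivalence class of `Γ₀`, i.e. the maximally
`Log`-consistent sets `Δ` with `Γ₀[⊞] ⊆ Δ`. -/
def canonDomain (Γ₀ : Set Form) : Set (Set Form) :=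
  {Δ | MCS Δ ∧ boxSet Γ₀ ⊆ Δ}
/-- The data of a problem-sensitive model: worlds, a conative relation, a set
of decision problems with a fusion operation and a solution assignment for
atoms, a problem assignment `f`, and a valuation `V`. -/
structure PreModel where
  W : Type
  R : W → W → Prop
  P : Type
  fuse : P → P → P
  satom : ℕ → Set P
  f : W → P
  V : ℕ → Set W

/-- The extension of the solution assignment to the whole language `L_CPL`. -/
def PreModel.sol (M : PreModel) : CPL → Set M.P
  | .top => Set.univ
  | .atom p => M.satom p
  | .neg φ => M.sol φ
  | .or φ ψ => M.sol φ ∩ M.sol ψ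
  | .and φ ψ => {c | ∃ a ∈ M.sol φ, ∃ b ∈ M.sol ψ, c = M.fuse a b}

/-- Classical satisfaction of `L_CPL` formulas at a world. -/
def PreModel.satCPL (M : PreModel) : M.W → CPL → Prop
  | _, .top => True
  | w, .atom p => w ∈ M.V p
  | w, .neg φ => ¬ M.satCPL w φ
  | w, .or φ ψ => M.satCPL w φ ∨ M.satCPL w ψ
  | w, .and φ ψ => M.satCPL w φ ∧ M.satCPL w ψ

/-- Satisfaction of `L_Int` formulas: Boolean clauses are classical,
`M,w ⊨ ⊞φ` iff `φ` holds at every world, and `M,w ⊨ Iα` iff `α` holds at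
every conative alternative of `w` and `f(w) ∈ s(α)`. -/
def PreModel.sat (M : PreModel) : M.W → Form → Prop
  | w, .of α => M.satCPL w α
  | w, .neg φ => ¬ M.sat w φ
  | w, .or φ ψ => M.sat w φ ∨ M.sat w ψ
  | w, .and φ ψ => M.sat w φ ∧ M.sat w ψ
  | _, .box φ => ∀ v, M.sat v φ
  | w, .int α => (∀ v, M.R w v → M.satCPL v α) ∧ M.f w ∈ M.sol α

/-- A problem-sensitive model: a nonempty set of worlds, a serial conative
relation, a problems model (nonempty carrier; idempotent, commutative,
associative fusion with unrestricted fusion; upward-closed solution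
assignment), a problem assignment, and a valuation. -/
structure PSModel extends PreModel where
  Wnonempty : Nonempty W
  serial : ∀ w, ∃ v, R w v
  Pnonempty : Nonempty P
  idem : ∀ a, fuse a a = a
  comm : ∀ a b, fuse a b = fuse b a
  assoc : ∀ a b c, fuse (fuse a b) c = fuse a (fuse b c)
  fusion : ∀ A : Set P, ∃ a, (∀ x ∈ A, fuse x a = a) ∧
    ∀ b, (∀ x ∈ A, fuse x b = b) → fuse a b = b
  upward : ∀ (p : ℕ) (a b : P), fuse a b = b → a ∈ satom p → b ∈ satom p
/-- The data of the canonical model for `Γ₀`: worlds are the members of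
`[Γ₀]_⊞`; `Δ R^c Γ` iff `Δ[I] ⊆ Γ`; `P^c = 𝒫(Prop)` with fusion `∪` and
`s^c(p) = {A : p ∈ A}`; `f^c(Δ) = {p : Ip̄ ∈ Δ}`; `V^c(p) = {Δ : p ∈ Δ}`. -/
def canonPre (Γ₀ : Set Form) : PreModel where
  W := {Δ : Set Form // Δ ∈ canonDomain Γ₀}
  R := fun Δ Γ => intSet Δ.1 ⊆ Γ.1
  P := Set ℕ
  fuse := fun A B => A ∪ B
  satom := fun p => {A | p ∈ A}
  f := fun Δ => {p | Form.int (pbar p) ∈ Δ.1}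
  V := fun p => {Δ | Form.of (.atom p) ∈ Δ.1}

/- ========= Auxiliary development for the Truth Lemma ========= -/

section TruthLemmaAux

open Classical

/-! ### Basic facts about `Deriv` -/

theorem Deriv.mono {Γ Δ : Set Form} {φ : Form} (h : Deriv Γ φ) (hsub : Γ ⊆ Δ) :
    Deriv Δ φ := by
  induction h with
  | prem h => exact .prem (hsub h)
  | taut h => exact .taut h
  | mp _ _ ih1 ih2 => exact .mp (ih1 hsub) (ih2 hsub)
  | boxK φ ψ => exact .boxK φ ψ
  | boxT φ => exact .boxT φ
  | box5 φ => exact .box5 φ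
  | nec h => exact .nec h
  | ax1 => exact .ax1
  | ax2 α => exact .ax2 α
  | ax3 α => exact .ax3 α
  | ax4 α β => exact .ax4 α β
  | ax5 α β => exact .ax5 α β

/-! ### Tautologies -/

theorem tI (φ : Form) : Taut (φ.imp φ) := by
  intro v u
  simp only [Form.imp, Form.eval]
  cases Form.eval v u φ <;> rfl

theorem tK (φ ψ : Form) : Taut (ψ.imp (φ.imp ψ)) := by
  intro v u
  simp only [Form.imp, Form.eval]
  cases Form.eval v u ψ <;> cases Form.eval v u φ <;> rfl

theorem tS (φ a b : Form) :
    Taut ((φ.imp (a.imp b)).imp ((φ.imp a).imp (φ.imp b))) := by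
  intro v u
  simp only [Form.imp, Form.eval]
  cases Form.eval v u φ <;> cases Form.eval v u a <;> cases Form.eval v u b <;> rfl

theorem tComp (a b c : Form) :
    Taut ((a.imp b).imp ((b.imp c).imp (a.imp c))) := by
  intro v u
  simp only [Form.imp, Form.eval]
  cases Form.eval v u a <;> cases Form.eval v u b <;> cases Form.eval v u c <;> rfl

theorem tAndI (a b : Form) : Taut (a.imp (b.imp (a.and b))) := by
  intro v u
  simp only [Form.imp, Form.eval]
  cases Form.eval v u a <;> cases Form.eval v u b <;> rfl

theorem tAndL (a b : Form) : Taut ((a.and b).imp a) := by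
  intro v u
  simp only [Form.imp, Form.eval]
  cases Form.eval v u a <;> cases Form.eval v u b <;> rfl

theorem tAndR (a b : Form) : Taut ((a.and b).imp b) := by
  intro v u
  simp only [Form.imp, Form.eval]
  cases Form.eval v u a <;> cases Form.eval v u b <;> rfl

theorem tOrL (a b : Form) : Taut (a.imp (a.or b)) := by
  intro v u
  simp only [Form.imp, Form.eval]
  cases Form.eval v u a <;> cases Form.eval v u b <;> rfl

theorem tOrR (a b : Form) : Taut (b.imp (a.or b)) := by
  intro v u
  simp only [Form.imp, Form.eval]
  cases Form.eval v u a <;> cases Form.eval v u b <;> rfl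

theorem tOrE (a b : Form) :
    Taut ((a.or b).imp ((Form.neg a).imp ((Form.neg b).imp Form.bot))) := by
  intro v u
  simp only [Form.imp, Form.bot, Form.eval, CPL.eval]
  cases Form.eval v u a <;> cases Form.eval v u b <;> rfl

theorem tNegE (a : Form) : Taut (a.imp ((Form.neg a).imp Form.bot)) := by
  intro v u
  simp only [Form.imp, Form.bot, Form.eval, CPL.eval]
  cases Form.eval v u a <;> rfl

theorem tRAA (a : Form) : Taut (((Form.neg a).imp Form.bot).imp a) := by
  intro v u
  simp only [Form.imp, Form.bot, Form.eval, CPL.eval]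
  cases Form.eval v u a <;> rfl

theorem tContra1 (a b : Form) :
    Taut (((Form.neg a).imp b).imp ((Form.neg b).imp a)) := by
  intro v u
  simp only [Form.imp, Form.eval]
  cases Form.eval v u a <;> cases Form.eval v u b <;> rfl

theorem tContra2 (a b : Form) :
    Taut ((b.imp (Form.neg a)).imp (a.imp (Form.neg b))) := by
  intro v u
  simp only [Form.imp, Form.eval]
  cases Form.eval v u a <;> cases Form.eval v u b <;> rfl

theorem tIffL (a b : Form) : Taut ((a.iff b).imp (a.imp b)) := by
  intro v u
  simp only [Form.imp, Form.iff, Form.eval]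
  cases Form.eval v u a <;> cases Form.eval v u b <;> rfl

theorem tIffR (a b : Form) : Taut ((a.iff b).imp (b.imp a)) := by
  intro v u
  simp only [Form.imp, Form.iff, Form.eval]
  cases Form.eval v u a <;> cases Form.eval v u b <;> rfl

theorem tOfTop : Taut (Form.of .top) := by
  intro v u
  rfl

theorem tOfNeg (α : CPL) :
    Taut ((Form.of (.neg α)).iff (Form.neg (.of α))) := by
  intro v u
  simp only [Form.imp, Form.iff, Form.eval, CPL.eval]
  cases CPL.eval v α <;> rfl

theorem tOfAnd (α β : CPL) :
    Taut ((Form.of (.and α β)).iff ((Form.of α).and (Form.of β))) := by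
  intro v u
  simp only [Form.imp, Form.iff, Form.eval, CPL.eval]
  cases CPL.eval v α <;> cases CPL.eval v β <;> rfl

theorem tOfOr (α β : CPL) :
    Taut ((Form.of (.or α β)).iff ((Form.of α).or (Form.of β))) := by
  intro v u
  simp only [Form.imp, Form.iff, Form.eval, CPL.eval]
  cases CPL.eval v α <;> cases CPL.eval v β <;> rfl

theorem tClaim (ψ c : CPL) (χ ρ : Form) :
    Taut (((Form.of ψ).imp χ).imp
      (((Form.of c).imp (χ.imp ρ)).imp ((Form.of (ψ.and c)).imp ρ))) := by
  intro v u
  simp only [Form.imp, Form.eval, CPL.eval]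
  cases CPL.eval v ψ <;> cases CPL.eval v c <;>
    cases Form.eval v u χ <;> cases Form.eval v u ρ <;> rfl

/-! ### Deduction theorem -/

theorem deduction_aux {Δ : Set Form} {ψ : Form} (h : Deriv Δ ψ) :
    ∀ (Γ : Set Form) (φ : Form), Δ ⊆ insert φ Γ → Deriv Γ (φ.imp ψ) := by
  induction h with
  | @prem _ χ h =>
    intro Γ φ hsub
    rcases Set.mem_insert_iff.1 (hsub h) with h' | h'
    · cases h'
      exact .taut (tI _)
    · exact .mp (.taut (tK φ χ)) (.prem h')
  | taut h =>
    intro Γ φ _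
    exact .mp (.taut (tK _ _)) (.taut h)
  | mp _ _ ih1 ih2 =>
    intro Γ φ hsub
    exact .mp (.mp (.taut (tS _ _ _)) (ih1 Γ φ hsub)) (ih2 Γ φ hsub)
  | boxK a b => exact fun Γ φ _ => .mp (.taut (tK _ _)) (.boxK a b)
  | boxT a => exact fun Γ φ _ => .mp (.taut (tK _ _)) (.boxT a)
  | box5 a => exact fun Γ φ _ => .mp (.taut (tK _ _)) (.box5 a)
  | nec h => exact fun Γ φ _ => .mp (.taut (tK _ _)) (.nec h)
  | ax1 => exact fun Γ φ _ => .mp (.taut (tK _ _)) .ax1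
  | ax2 α => exact fun Γ φ _ => .mp (.taut (tK _ _)) (.ax2 α)
  | ax3 α => exact fun Γ φ _ => .mp (.taut (tK _ _)) (.ax3 α)
  | ax4 α β => exact fun Γ φ _ => .mp (.taut (tK _ _)) (.ax4 α β)
  | ax5 α β => exact fun Γ φ _ => .mp (.taut (tK _ _)) (.ax5 α β)

theorem deduction {Γ : Set Form} {φ ψ : Form} (h : Deriv (insert φ Γ) ψ) :
    Deriv Γ (φ.imp ψ) :=
  deduction_aux h Γ φ subset_rfl

/-! ### Compactness -/

theorem compact {Γ : Set Form} {φ : Form} (h : Deriv Γ φ) :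
    ∃ L : List Form, (∀ χ ∈ L, χ ∈ Γ) ∧ Deriv {χ | χ ∈ L} φ := by
  induction h with
  | @prem _ χ h =>
    exact ⟨[χ], by simpa using h, .prem (by simp)⟩
  | taut h => exact ⟨[], by simp, .taut h⟩
  | mp _ _ ih1 ih2 =>
    obtain ⟨L1, hL1, hd1⟩ := ih1
    obtain ⟨L2, hL2, hd2⟩ := ih2
    refine ⟨L1 ++ L2, ?_, ?_⟩
    · intro χ hχ
      rcases List.mem_append.1 hχ with h' | h'
      · exact hL1 χ h'
      · exact hL2 χ h'
    · exact .mp (hd1.mono (by intro x hx; simp_all)) (hd2.mono (by intro x hx; simp_all))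
  | boxK a b => exact ⟨[], by simp, .boxK a b⟩
  | boxT a => exact ⟨[], by simp, .boxT a⟩
  | box5 a => exact ⟨[], by simp, .box5 a⟩
  | nec h => exact ⟨[], by simp, .nec h⟩
  | ax1 => exact ⟨[], by simp, .ax1⟩
  | ax2 α => exact ⟨[], by simp, .ax2 α⟩
  | ax3 α => exact ⟨[], by simp, .ax3 α⟩
  | ax4 α β => exact ⟨[], by simp, .ax4 α β⟩
  | ax5 α β => exact ⟨[], by simp, .ax5 α β⟩

/-! ### Lindenbaum -/

theorem lindenbaum {Γ : Set Form} (h : LogConsistent Γ) :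
    ∃ Δ, MCS Δ ∧ Γ ⊆ Δ := by
  have hub : ∀ c ⊆ {Δ : Set Form | LogConsistent Δ}, IsChain (· ⊆ ·) c →
      c.Nonempty → ∃ ub ∈ {Δ : Set Form | LogConsistent Δ}, ∀ s ∈ c, s ⊆ ub := by
    intro c hc hchain hne
    refine ⟨⋃₀ c, ?_, fun s hs => Set.subset_sUnion_of_mem hs⟩
    intro hbot
    obtain ⟨L, hL, hd⟩ := compact hbot
    have key : ∀ L' : List Form, (∀ χ ∈ L', χ ∈ ⋃₀ c) →
        ∃ T ∈ c, ∀ χ ∈ L', χ ∈ T := by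
      intro L'
      induction L' with
      | nil => exact fun _ => ⟨hne.choose, hne.choose_spec, by simp⟩
      | cons a L ih =>
        intro hL
        obtain ⟨T, hT, hTL⟩ := ih (fun χ hχ => hL χ (by simp [hχ]))
        obtain ⟨T', hT', haT'⟩ := hL a (by simp)
        rcases eq_or_ne T T' with rfl | hne'
        · refine ⟨T, hT, ?_⟩
          intro χ hχ
          rcases List.mem_cons.1 hχ with rfl | h'
          exacts [haT', hTL χ h']
        · rcases hchain hT hT' hne' with hsub | hsub
          · refine ⟨T', hT', ?_⟩
            intro χ hχ
            rcases List.mem_cons.1 hχ with rfl | h'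
            exacts [haT', hsub (hTL χ h')]
          · refine ⟨T, hT, ?_⟩
            intro χ hχ
            rcases List.mem_cons.1 hχ with rfl | h'
            exacts [hsub haT', hTL χ h']
    obtain ⟨T, hT, hTL⟩ := key L hL
    exact hc hT (hd.mono fun χ hχ => hTL χ hχ)
  obtain ⟨m, hm1, hm2⟩ :=
    zorn_subset_nonempty {Δ : Set Form | LogConsistent Δ} hub Γ h
  refine ⟨m, ⟨hm2.1, ?_⟩, hm1⟩
  intro Δ hΔ hsub
  exact (hm2.2 hΔ hsub).antisymm hsub

/-! ### MCS facts -/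

theorem MCS.mem_of_deriv {Γ : Set Form} (hΓ : MCS Γ) {φ : Form}
    (h : Deriv Γ φ) : φ ∈ Γ := by
  by_contra hφ
  have hcons : LogConsistent (insert φ Γ) := by
    intro hbot
    exact hΓ.1 (.mp (deduction hbot) h)
  have := hΓ.2 _ hcons (Set.subset_insert _ _)
  exact hφ (this ▸ Set.mem_insert φ Γ)

theorem MCS.imp_closed {Γ : Set Form} (hΓ : MCS Γ) {φ ψ : Form}
    (h : Deriv Γ (φ.imp ψ)) (hφ : φ ∈ Γ) : ψ ∈ Γ :=
  hΓ.mem_of_deriv (.mp h (.prem hφ))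

theorem MCS.not_both {Γ : Set Form} (hΓ : MCS Γ) {φ : Form}
    (h1 : φ ∈ Γ) (h2 : Form.neg φ ∈ Γ) : False :=
  hΓ.1 (.mp (.mp (.taut (tNegE φ)) (.prem h1)) (.prem h2))

theorem MCS.neg_complete {Γ : Set Form} (hΓ : MCS Γ) {φ : Form}
    (h : φ ∉ Γ) : Form.neg φ ∈ Γ := by
  have hcons : LogConsistent (insert (Form.neg φ) Γ) := by
    intro hbot
    exact h (hΓ.mem_of_deriv (.mp (.taut (tRAA φ)) (deduction hbot)))
  have := hΓ.2 _ hcons (Set.subset_insert _ _)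
  exact this ▸ Set.mem_insert _ Γ

theorem MCS.neg_mem_iff {Γ : Set Form} (hΓ : MCS Γ) {φ : Form} :
    Form.neg φ ∈ Γ ↔ φ ∉ Γ :=
  ⟨fun h2 h1 => hΓ.not_both h1 h2, hΓ.neg_complete⟩

theorem MCS.and_mem_iff {Γ : Set Form} (hΓ : MCS Γ) {φ ψ : Form} :
    Form.and φ ψ ∈ Γ ↔ φ ∈ Γ ∧ ψ ∈ Γ := by
  constructor
  · intro h
    exact ⟨hΓ.imp_closed (.taut (tAndL φ ψ)) h, hΓ.imp_closed (.taut (tAndR φ ψ)) h⟩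
  · rintro ⟨h1, h2⟩
    exact hΓ.mem_of_deriv (.mp (.mp (.taut (tAndI φ ψ)) (.prem h1)) (.prem h2))

theorem MCS.or_mem_iff {Γ : Set Form} (hΓ : MCS Γ) {φ ψ : Form} :
    Form.or φ ψ ∈ Γ ↔ φ ∈ Γ ∨ ψ ∈ Γ := by
  constructor
  · intro h
    by_contra hcon
    push_neg at hcon
    exact hΓ.1 (.mp (.mp (.mp (.taut (tOrE φ ψ)) (.prem h))
      (.prem (hΓ.neg_complete hcon.1))) (.prem (hΓ.neg_complete hcon.2)))
  · rintro (h | h)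
    · exact hΓ.imp_closed (.taut (tOrL φ ψ)) h
    · exact hΓ.imp_closed (.taut (tOrR φ ψ)) h

theorem MCS.iff_mem {Γ : Set Form} (hΓ : MCS Γ) {φ ψ : Form}
    (h : Deriv Γ (φ.iff ψ)) : (φ ∈ Γ ↔ ψ ∈ Γ) :=
  ⟨hΓ.imp_closed (.mp (.taut (tIffL φ ψ)) h),
   hΓ.imp_closed (.mp (.taut (tIffR φ ψ)) h)⟩

/-! ### Derived modal principles -/

theorem derivChain {Γ : Set Form} {a b c : Form} (h1 : Deriv Γ (a.imp b))
    (h2 : Deriv Γ (b.imp c)) : Deriv Γ (a.imp c) :=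
  .mp (.mp (.taut (tComp a b c)) h1) h2

theorem rk1 {Γ : Set Form} {A B : Form} (h : Deriv (∅ : Set Form) (A.imp B))
    (hA : Deriv Γ (Form.box A)) : Deriv Γ (Form.box B) :=
  .mp (.mp (.boxK A B) (.nec h)) hA

theorem rk2 {Γ : Set Form} {A B C : Form}
    (h : Deriv (∅ : Set Form) (A.imp (B.imp C)))
    (hA : Deriv Γ (Form.box A)) (hB : Deriv Γ (Form.box B)) :
    Deriv Γ (Form.box C) :=
  .mp (.mp (.boxK B C) (rk1 h hA)) hB

theorem deriv4 {Γ : Set Form} (φ : Form) :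
    Deriv Γ ((Form.box φ).imp (Form.box (Form.box φ))) := by
  -- ◇□φ = ¬□¬□φ
  have E1 : Deriv (∅ : Set Form)
      ((Form.neg (Form.box (Form.neg (Form.box φ)))).imp (Form.box φ)) :=
    .mp (.taut (tContra1 (Form.box φ) (Form.box (Form.neg (Form.box φ))))) (.box5 φ)
  have E2 : Deriv Γ
      ((Form.box φ).imp (Form.neg (Form.box (Form.neg (Form.box φ))))) :=
    .mp (.taut (tContra2 (Form.box φ) (Form.box (Form.neg (Form.box φ)))))
      (.boxT (Form.neg (Form.box φ)))
  have E3 : Deriv Γ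
      ((Form.neg (Form.box (Form.neg (Form.box φ)))).imp
        (Form.box (Form.neg (Form.box (Form.neg (Form.box φ)))))) :=
    .box5 (Form.neg (Form.box φ))
  have E4 := derivChain E2 E3
  have E5 : Deriv Γ
      ((Form.box (Form.neg (Form.box (Form.neg (Form.box φ))))).imp
        (Form.box (Form.box φ))) :=
    .mp (.boxK _ _) (.nec E1)
  exact derivChain E4 E5

theorem box_transfer {Γ₀ Δ : Set Form} (hΓ₀ : MCS Γ₀) (hΔ : MCS Δ)
    (hsub : boxSet Γ₀ ⊆ Δ) {φ : Form} :
    Form.box φ ∈ Δ ↔ Form.box φ ∈ Γ₀ := by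
  constructor
  · intro h
    by_contra h'
    have h1 : Form.neg (Form.box φ) ∈ Γ₀ := hΓ₀.neg_complete h'
    have h2 : Form.box (Form.neg (Form.box φ)) ∈ Γ₀ :=
      hΓ₀.imp_closed (.box5 φ) h1
    exact hΔ.not_both h (hsub h2)
  · intro h
    have h2 : Form.box (Form.box φ) ∈ Γ₀ := hΓ₀.imp_closed (deriv4 φ) h
    exact hsub h2

/-! ### Iterated implications and conjunctions -/

def imps (L : List Form) (φ : Form) : Form :=
  L.foldl (fun acc a => Form.imp a acc) φ

theorem imps_cons (a : Form) (L : List Form) (φ : Form) :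
    imps (a :: L) φ = imps L (a.imp φ) := rfl

theorem listDeduction : ∀ (L : List Form) (φ : Form),
    Deriv {χ | χ ∈ L} φ → Deriv (∅ : Set Form) (imps L φ) := by
  intro L
  induction L with
  | nil =>
    intro φ h
    exact h.mono (by intro x hx; simp at hx)
  | cons a L ih =>
    intro φ h
    have hsub : {χ | χ ∈ a :: L} ⊆ insert a {χ | χ ∈ L} := by
      intro x hx
      simp only [Set.mem_setOf_eq, List.mem_cons] at hx
      rcases hx with rfl | hx
      · exact Set.mem_insert _ _
      · exact Set.mem_insert_of_mem _ hx
    exact ih (a.imp φ) (deduction_aux h _ a hsub)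

theorem boximps {Γ : Set Form} : ∀ (L : List Form) (φ : Form),
    (∀ χ ∈ L, Form.box χ ∈ Γ) → Deriv Γ (Form.box (imps L φ)) →
    Deriv Γ (Form.box φ) := by
  intro L
  induction L with
  | nil => exact fun φ _ hd => hd
  | cons a L ih =>
    intro φ h hd
    have := ih (a.imp φ) (fun χ hχ => h χ (by simp [hχ])) hd
    exact .mp (.mp (.boxK a φ) this) (.prem (h a (by simp)))

def cpls (L : List CPL) : CPL := L.foldr .and .top

/-! ### Box membership characterisation -/

theorem all_of_box_mem {Γ₀ : Set Form} (hΓ₀ : MCS Γ₀) {Δ : Set Form}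
    (hΔ : Δ ∈ canonDomain Γ₀) {φ : Form} (h : Form.box φ ∈ Δ) :
    ∀ Γ ∈ canonDomain Γ₀, φ ∈ Γ := by
  intro Γ hΓ
  have hb : Form.box φ ∈ Γ₀ := (box_transfer hΓ₀ hΔ.1 hΔ.2).1 h
  exact hΓ.2 hb

theorem box_mem_of_all {Γ₀ : Set Form} (hΓ₀ : MCS Γ₀) {Δ : Set Form}
    (hΔ : Δ ∈ canonDomain Γ₀) {φ : Form}
    (h : ∀ Γ ∈ canonDomain Γ₀, φ ∈ Γ) : Form.box φ ∈ Δ := by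
  rw [box_transfer hΓ₀ hΔ.1 hΔ.2]
  by_contra h'
  have hcons : LogConsistent (insert (Form.neg φ) (boxSet Γ₀)) := by
    intro hbot
    have hd : Deriv (boxSet Γ₀) φ := .mp (.taut (tRAA φ)) (deduction hbot)
    obtain ⟨L, hL, hdL⟩ := compact hd
    have h0 : Deriv (∅ : Set Form) (imps L φ) := listDeduction L φ hdL
    have hbox : Deriv Γ₀ (Form.box φ) :=
      boximps L φ (fun χ hχ => hL χ hχ) (.nec h0)
    exact h' (hΓ₀.mem_of_deriv hbox)
  obtain ⟨Γ, hΓmcs, hΓsub⟩ := lindenbaum hcons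
  have hΓdom : Γ ∈ canonDomain Γ₀ :=
    ⟨hΓmcs, fun χ hχ => hΓsub (Set.mem_insert_of_mem _ hχ)⟩
  exact hΓmcs.not_both (h Γ hΓdom) (hΓsub (Set.mem_insert _ _))

/-! ### CPL truth lemma -/

theorem cpl_truth {Γ₀ : Set Form} (Γ : (canonPre Γ₀).W) :
    ∀ α : CPL, (canonPre Γ₀).satCPL Γ α ↔ Form.of α ∈ Γ.1 := by
  have hΓ : MCS Γ.1 := Γ.2.1
  intro α
  induction α with
  | top =>
    simp only [PreModel.satCPL]
    exact ⟨fun _ => hΓ.mem_of_deriv (.taut tOfTop), fun _ => trivial⟩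
  | atom p => exact Iff.rfl
  | neg α ih =>
    simp only [PreModel.satCPL]
    rw [ih, ← hΓ.neg_mem_iff]
    exact (hΓ.iff_mem (.taut (tOfNeg α))).symm
  | or α β iha ihb =>
    simp only [PreModel.satCPL]
    rw [iha, ihb, ← hΓ.or_mem_iff]
    exact (hΓ.iff_mem (.taut (tOfOr α β))).symm
  | and α β iha ihb =>
    simp only [PreModel.satCPL]
    rw [iha, ihb, ← hΓ.and_mem_iff]
    exact (hΓ.iff_mem (.taut (tOfAnd α β))).symm

/-! ### Solutions in the canonical problems model -/

theorem sol_canon (Γ₀ : Set Form) : ∀ (α : CPL) (A : Set ℕ),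
    A ∈ (canonPre Γ₀).sol α ↔ ∀ p ∈ α.var, p ∈ A := by
  intro α
  induction α with
  | top => intro A; simp [PreModel.sol, CPL.var]; trivial
  | atom p => intro A; simp [PreModel.sol, CPL.var, canonPre]; exact Iff.rfl
  | neg α ih => intro A; simpa [PreModel.sol, CPL.var] using ih A
  | or α β iha ihb =>
    intro A
    simp only [PreModel.sol, Set.mem_inter_iff, iha, ihb, CPL.var]
    constructor
    · rintro ⟨h1, h2⟩ p hp
      rcases Finset.mem_union.1 hp with h | h
      exacts [(iha A).1 h1 p h, (ihb A).1 h2 p h]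
    · intro h
      exact ⟨(iha A).2 fun p hp => h p (Finset.mem_union_left _ hp),
             (ihb A).2 fun p hp => h p (Finset.mem_union_right _ hp)⟩
  | and α β iha ihb =>
    intro A
    simp only [PreModel.sol, Set.mem_setOf_eq, CPL.var]
    constructor
    · rintro ⟨a, ha, b, hb, rfl⟩ p hp
      rcases Finset.mem_union.1 hp with h | h
      · exact Set.mem_union_left _ ((iha a).1 ha p h)
      · exact Set.mem_union_right _ ((ihb b).1 hb p h)
    · intro h
      refine ⟨A, (iha A).2 fun p hp => h p (Finset.mem_union_left _ hp),
              A, (ihb A).2 fun p hp => h p (Finset.mem_union_right _ hp), ?_⟩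
      show A = A ∪ A
      simp

/-! ### Intention conjunctions -/

theorem int_cpls_mem {Δ : Set Form} (hΔ : MCS Δ) : ∀ (L : List CPL),
    (∀ ψ ∈ L, Form.int ψ ∈ Δ) → Form.int (cpls L) ∈ Δ := by
  intro L
  induction L with
  | nil => exact fun _ => hΔ.mem_of_deriv .ax1
  | cons a L ih =>
    intro h
    have h1 : Form.int a ∈ Δ := h a (by simp)
    have h2 : Form.int (cpls L) ∈ Δ := ih fun ψ hψ => h ψ (by simp [hψ])
    have := (hΔ.iff_mem (.ax4 a (cpls L))).1 (hΔ.and_mem_iff.2 ⟨h1, h2⟩)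
    exact this

theorem int_conjList_iff {Δ : Set Form} (hΔ : MCS Δ) : ∀ (L : List CPL),
    Form.int (conjList L) ∈ Δ ↔ ∀ β ∈ L, Form.int β ∈ Δ := by
  intro L
  induction L with
  | nil =>
    simp only [conjList]
    exact ⟨fun _ β hβ => by simp at hβ, fun _ => hΔ.mem_of_deriv .ax1⟩
  | cons a L ih =>
    cases L with
    | nil => simp [conjList]
    | cons b L' =>
      show Form.int (CPL.and a (conjList (b :: L'))) ∈ Δ ↔ _
      rw [← hΔ.iff_mem (.ax4 a (conjList (b :: L'))), hΔ.and_mem_iff, ih]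
      constructor
      · rintro ⟨h1, h2⟩ β hβ
        rcases List.mem_cons.1 hβ with rfl | hβ
        exacts [h1, h2 β hβ]
      · intro h
        exact ⟨h a (by simp), fun β hβ => h β (by simp [hβ])⟩

theorem int_bar_iff {Δ : Set Form} (hΔ : MCS Δ) (α : CPL) :
    Form.int α.bar ∈ Δ ↔ ∀ p ∈ α.var, Form.int (pbar p) ∈ Δ := by
  unfold CPL.bar
  rw [int_conjList_iff hΔ]
  constructor
  · intro h p hp
    exact h (pbar p) (List.mem_map_of_mem (f := pbar) ((Finset.mem_sort _).2 hp))
  · intro h β hβ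
    obtain ⟨p, hp, rfl⟩ := List.mem_map.1 hβ
    exact h p ((Finset.mem_sort _).1 hp)

/-! ### The key combination for Ax5 -/

theorem intClaim {Δ : Set Form} : ∀ (PL : List (CPL × Form)) (ρ : Form),
    (∀ p ∈ PL, Deriv Δ (Form.box ((Form.of p.1).imp p.2))) →
    Deriv Δ (Form.box (imps (PL.map Prod.snd) ρ)) →
    Deriv Δ (Form.box ((Form.of (cpls (PL.map Prod.fst))).imp ρ)) := by
  intro PL
  induction PL with
  | nil =>
    intro ρ _ hd
    exact rk1 (.taut (tK (Form.of .top) ρ)) hd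
  | cons p PL ih =>
    intro ρ h hd
    obtain ⟨ψ, χ⟩ := p
    have hd' : Deriv Δ (Form.box (imps (PL.map Prod.snd) (χ.imp ρ))) := hd
    have ihr := ih (χ.imp ρ) (fun q hq => h q (by simp [hq])) hd'
    have hp : Deriv Δ (Form.box ((Form.of ψ).imp χ)) := h (ψ, χ) (by simp)
    exact rk2 (.taut (tClaim ψ (cpls (PL.map Prod.fst)) χ ρ)) hp ihr

end TruthLemmaAux


/-- Truth Lemma: For any maximally `Log`-consistent `Γ₀`, any
world `Δ ∈ [Γ₀]_⊞` of the canonical model for `Γ₀`, and any `φ ∈ L_Int`: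
`M^c, Δ ⊨ φ` iff `φ ∈ Δ`. -/
theorem truth_lemma (Γ₀ : Set Form) (hΓ₀ : MCS Γ₀)
    (Δ : (canonPre Γ₀).W) (φ : Form) :
    (canonPre Γ₀).sat Δ φ ↔ φ ∈ Δ.1 := by
  induction φ generalizing Δ with
  | of α => exact cpl_truth Δ α
  | neg φ ih =>
    simp only [PreModel.sat]
    rw [ih Δ]
    exact ((Δ.2.1 : MCS Δ.1).neg_mem_iff).symm
  | or φ ψ ih1 ih2 =>
    simp only [PreModel.sat]
    rw [ih1 Δ, ih2 Δ]
    exact ((Δ.2.1 : MCS Δ.1).or_mem_iff).symm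
  | and φ ψ ih1 ih2 =>
    simp only [PreModel.sat]
    rw [ih1 Δ, ih2 Δ]
    exact ((Δ.2.1 : MCS Δ.1).and_mem_iff).symm
  | box φ ih =>
    simp only [PreModel.sat]
    constructor
    · intro h
      exact box_mem_of_all hΓ₀ Δ.2 fun Γ hΓ => (ih ⟨Γ, hΓ⟩).1 (h ⟨Γ, hΓ⟩)
    · intro h v
      exact (ih v).2 (all_of_box_mem hΓ₀ Δ.2 h v.1 v.2)
  | int α =>
    simp only [PreModel.sat]
    have hΔ : MCS Δ.1 := Δ.2.1
    constructor
    · classical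
      rintro ⟨hsucc, hsol⟩
      have hbar : Form.int α.bar ∈ Δ.1 := by
        rw [int_bar_iff hΔ]
        intro p hp
        exact (sol_canon Γ₀ α ((canonPre Γ₀).f Δ)).1 hsol p hp
      by_contra hα
      have hcons : LogConsistent (insert (Form.neg (Form.of α)) (intSet Δ.1)) := by
        intro hbot
        have hd : Deriv (intSet Δ.1) (Form.of α) :=
          .mp (.taut (tRAA _)) (deduction hbot)
        obtain ⟨L, hL, hdL⟩ := compact hd
        let pick : Form → CPL := fun χ =>
          if h : ∃ ψ : CPL,
              Form.and (Form.int ψ) (Form.box ((Form.of ψ).imp χ)) ∈ Δ.1 then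
            h.choose else .top
        have pickspec : ∀ χ ∈ L,
            Form.and (Form.int (pick χ))
              (Form.box ((Form.of (pick χ)).imp χ)) ∈ Δ.1 := by
          intro χ hχ
          have hx : ∃ ψ : CPL,
              Form.and (Form.int ψ) (Form.box ((Form.of ψ).imp χ)) ∈ Δ.1 :=
            hL χ hχ
          simp only [pick, dif_pos hx]
          exact hx.choose_spec
        set PL : List (CPL × Form) := L.map (fun χ => (pick χ, χ)) with hPL
        have hsnd : PL.map Prod.snd = L := by
          rw [hPL, List.map_map]
          exact List.map_id L
        have h0 : Deriv (∅ : Set Form) (imps L (Form.of α)) :=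
          listDeduction L _ hdL
        have hb : Deriv Δ.1 (Form.box (imps (PL.map Prod.snd) (Form.of α))) := by
          rw [hsnd]; exact .nec h0
        have hboxes : ∀ p ∈ PL, Deriv Δ.1 (Form.box ((Form.of p.1).imp p.2)) := by
          intro p hp
          obtain ⟨χ, hχ, rfl⟩ := List.mem_map.1 hp
          exact .prem (hΔ.and_mem_iff.1 (pickspec χ hχ)).2
        have hmain := intClaim PL (Form.of α) hboxes hb
        have hints : Form.int (cpls (PL.map Prod.fst)) ∈ Δ.1 := by
          apply int_cpls_mem hΔ
          intro ψ hψ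
          simp only [hPL, List.map_map, List.mem_map, Function.comp] at hψ
          obtain ⟨χ, hχ, rfl⟩ := hψ
          exact (hΔ.and_mem_iff.1 (pickspec χ hχ)).1
        exact hα (hΔ.mem_of_deriv
          (.mp (.mp (.ax5 α (cpls (PL.map Prod.fst))) hmain)
            (.prem (hΔ.and_mem_iff.2 ⟨hints, hbar⟩))))
      obtain ⟨Γ, hΓmcs, hΓsub⟩ := lindenbaum hcons
      have hdom : Γ ∈ canonDomain Γ₀ := by
        refine ⟨hΓmcs, ?_⟩
        intro χ hχ
        have hboxΔ : Form.box χ ∈ Δ.1 := (box_transfer hΓ₀ hΔ Δ.2.2).2 hχ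
        have hmem : Form.and (Form.int .top)
            (Form.box ((Form.of .top).imp χ)) ∈ Δ.1 :=
          hΔ.and_mem_iff.2 ⟨hΔ.mem_of_deriv .ax1,
            hΔ.mem_of_deriv (rk1 (.taut (tK (Form.of .top) χ)) (.prem hboxΔ))⟩
        exact hΓsub (Set.mem_insert_of_mem _ ⟨.top, hmem⟩)
      have hR : intSet Δ.1 ⊆ Γ := fun χ hχ => hΓsub (Set.mem_insert_of_mem _ hχ)
      have hsat := hsucc ⟨Γ, hdom⟩ hR
      exact hΓmcs.not_both ((cpl_truth ⟨Γ, hdom⟩ α).1 hsat)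
        (hΓsub (Set.mem_insert _ _))
    · intro h
      refine ⟨?_, ?_⟩
      · intro v hv
        apply (cpl_truth v α).2
        apply hv
        exact ⟨α, hΔ.and_mem_iff.2
          ⟨h, hΔ.mem_of_deriv (.nec (.taut (tI (Form.of α))))⟩⟩
      · apply (sol_canon Γ₀ α _).2
        intro p hp
        exact (int_bar_iff hΔ α).1 (hΔ.imp_closed (.ax2 α) h) p hp
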